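/- Let G be a finite group and let φ be an automorphism of Ḡ such that φ(x) is conjugate to x in Ḡ and φ(y) is conjugate to y in Ḡ. Then the action of φ on 𝒫_c preserves the (G×G)-relation: for every pair (g,h) generating G, writing φ·[g,h]_c = [g′,h′]_c, the element g′ is conjugate to g in G and h′ is conjugate to h in G. -/
import Mathlib


/-- The free group on two generators. -/
abbrev F2 : Type := FreeGroup Bool

/-- The generator `x` of `F₂`. -/
def fx : F2 := FreeGroup.of true

/-- The generator `y` of `F₂`. -/
def fy : F2 := FreeGroup.of false

/-- A subgroup `N` of `Γ` *has index `G`* if it is normal with quotient isomorphic to `G`,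
equivalently it is the kernel of a surjective homomorphism onto `G`. -/
def HasIndex (G : Type) [Group G] {Γ : Type} [Group Γ] (N : Subgroup Γ) : Prop :=
  ∃ f : Γ →* G, Function.Surjective f ∧ f.ker = N

/-- `N_G`: the intersection of all subgroups of `F₂` of index `G`. -/
def NG (G : Type) [Group G] : Subgroup F2 := sInf {N | HasIndex G N}

instance NG_normal (G : Type) [Group G] : (NG G).Normal := by
  constructor
  intro n hn g
  rw [NG, Subgroup.mem_sInf] at hn ⊢
  rintro N ⟨f, hf, rfl⟩
  have h1 : f n = 1 := hn f.ker ⟨f, hf, rfl⟩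
  simp [MonoidHom.mem_ker, h1]

/-- The group `Ḡ = F₂ / N_G`. -/
abbrev Gbar (G : Type) [Group G] : Type := F2 ⧸ NG G

/-- The canonical generator `x` of `Ḡ`. -/
def xbar (G : Type) [Group G] : Gbar G := QuotientGroup.mk fx

/-- The canonical generator `y` of `Ḡ`. -/
def ybar (G : Type) [Group G] : Gbar G := QuotientGroup.mk fy

/-- The subgroup of inner automorphisms of `G`. -/
def Inn (G : Type) [Group G] : Subgroup (MulAut G) := (MulAut.conj : G →* MulAut G).range

instance Inn_normal (G : Type) [Group G] : (Inn G).Normal := by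
  constructor
  rintro n ⟨g, rfl⟩ φ
  refine ⟨φ g, ?_⟩
  ext h
  simp [MulAut.conj_apply, MulAut.inv_def, map_mul, map_inv]

/-- The outer automorphism group of `G`. -/
abbrev OutG (G : Type) [Group G] : Type := MulAut G ⧸ Inn G

/-- The canonical projection `Aut(G) → Out(G)`. -/
def OutMk {G : Type} [Group G] : MulAut G →* OutG G := QuotientGroup.mk' (Inn G)

/-- `𝒫`: the set of pairs of elements generating `G`. -/
def GenPairs (G : Type) [Group G] : Set (G × G) := {p | Subgroup.closure {p.1, p.2} = ⊤}

/-- The setoid on `𝒫` given by simultaneous conjugation (the action of inner automorphisms). -/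
def pairSetoid (G : Type) [Group G] : Setoid ↥(GenPairs G) where
  r p q := ∃ t : G, t * (p : G × G).1 * t⁻¹ = (q : G × G).1 ∧
    t * (p : G × G).2 * t⁻¹ = (q : G × G).2
  iseqv := by
    constructor
    · intro p; exact ⟨1, by simp, by simp⟩
    · rintro p q ⟨t, h1, h2⟩
      exact ⟨t⁻¹, by rw [← h1]; group, by rw [← h2]; group⟩
    · rintro p q s ⟨t, h1, h2⟩ ⟨u, h3, h4⟩
      exact ⟨u * t, by rw [← h3, ← h1]; group, by rw [← h4, ← h2]; group⟩

/-- `𝒫_c`: the set of generating pairs of `G` up to simultaneous conjugation. -/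
abbrev PC (G : Type) [Group G] : Type := Quotient (pairSetoid G)

/-- The class `[g,h]_c` in `𝒫_c` of a generating pair. -/
def pcMk {G : Type} [Group G] (p : G × G) (hp : p ∈ GenPairs G) : PC G :=
  Quotient.mk (pairSetoid G) ⟨p, hp⟩

/-- An automorphism of `G` applied to a generating pair. -/
def autPair {G : Type} [Group G] (α : MulAut G) (p : ↥(GenPairs G)) : ↥(GenPairs G) :=
  ⟨(α (p : G × G).1, α (p : G × G).2), by
    have hp : Subgroup.closure {(p : G × G).1, (p : G × G).2} = ⊤ := p.2
    show Subgroup.closure {α (p : G × G).1, α (p : G × G).2} = ⊤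
    have h1 : ({α (p : G × G).1, α (p : G × G).2} : Set G)
        = α.toMonoidHom '' {(p : G × G).1, (p : G × G).2} := by
      rw [Set.image_pair]; rfl
    rw [h1, ← MonoidHom.map_closure, hp]
    exact Subgroup.map_top_of_surjective _ α.surjective⟩

/-- The action of `Aut(G)` on `𝒫_c`, inducing the action of `Out(G)`. -/
instance pcAction (G : Type) [Group G] : MulAction (MulAut G) (PC G) where
  smul α := Quotient.map (autPair α) (by
    rintro p q ⟨t, h1, h2⟩
    refine ⟨α t, ?_, ?_⟩
    · show α t * α (p : G × G).1 * (α t)⁻¹ = α (q : G × G).1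
      rw [← map_inv, ← map_mul, ← map_mul, h1]
    · show α t * α (p : G × G).2 * (α t)⁻¹ = α (q : G × G).2
      rw [← map_inv, ← map_mul, ← map_mul, h2])
  one_smul := by
    intro z
    induction z using Quotient.ind
    rfl
  mul_smul := by
    intro a b z
    induction z using Quotient.ind
    rfl

/-- `[α(g), α(h)]_c` for a generating pair `(g,h)` and `α ∈ Aut(G)`. -/
def pcMkA {G : Type} [Group G] (α : MulAut G) (p : G × G) (hp : p ∈ GenPairs G) : PC G :=
  α • pcMk p hp

/-- The characterizing property of the action of `Out(Ḡ)` on `𝒫_c`: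
`φ·[α(x_i),α(y_i)]_c = [α(φ_i⁻¹(x_{σ(i)})), α(φ_i⁻¹(y_{σ(i)}))]_c` whenever
`p_{σ(i)} ∘ φ = φ_i ∘ p_i`. -/
def IsPCAction (G : Type) [Group G] {r : ℕ} (rep : Fin r → G × G)
    (hrep : ∀ i, rep i ∈ GenPairs G) (p : Fin r → (Gbar G →* G))
    (Φ : OutG (Gbar G) →* Equiv.Perm (PC G)) : Prop :=
  ∀ (φ : MulAut (Gbar G)) (σ : Equiv.Perm (Fin r)) (ψ : Fin r → MulAut G),
    (∀ i, (p (σ i)).comp φ.toMonoidHom = (ψ i).toMonoidHom.comp (p i)) →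
    ∀ (α : MulAut G) (i : Fin r),
      Φ (OutMk φ) (pcMkA α (rep i) (hrep i)) = pcMkA (α * (ψ i)⁻¹) (rep (σ i)) (hrep (σ i))

/-- Swapping the two entries of a generating pair. -/
def swapPair {G : Type} [Group G] (p : ↥(GenPairs G)) : ↥(GenPairs G) :=
  ⟨((p : G × G).2, (p : G × G).1), by
    have hp : Subgroup.closure {(p : G × G).1, (p : G × G).2} = ⊤ := p.2
    show Subgroup.closure {(p : G × G).2, (p : G × G).1} = ⊤
    rwa [Set.pair_comm]⟩

/-- The map `(g,h) ↦ (h⁻¹g⁻¹, h)` on generating pairs. -/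
def deltaPair {G : Type} [Group G] (p : ↥(GenPairs G)) : ↥(GenPairs G) :=
  ⟨((p : G × G).2⁻¹ * (p : G × G).1⁻¹, (p : G × G).2), by
    have hp : Subgroup.closure {(p : G × G).1, (p : G × G).2} = ⊤ := p.2
    show Subgroup.closure {(p : G × G).2⁻¹ * (p : G × G).1⁻¹, (p : G × G).2} = ⊤
    rw [eq_top_iff, ← hp]
    refine (Subgroup.closure_le _).mpr ?_
    have hb : (p : G × G).2 ∈
        Subgroup.closure ({(p : G × G).2⁻¹ * (p : G × G).1⁻¹, (p : G × G).2} : Set G) :=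
      Subgroup.subset_closure (by simp)
    have hc : (p : G × G).2⁻¹ * (p : G × G).1⁻¹ ∈
        Subgroup.closure ({(p : G × G).2⁻¹ * (p : G × G).1⁻¹, (p : G × G).2} : Set G) :=
      Subgroup.subset_closure (by simp)
    have ha : (p : G × G).1 ∈
        Subgroup.closure ({(p : G × G).2⁻¹ * (p : G × G).1⁻¹, (p : G × G).2} : Set G) := by
      have := Subgroup.inv_mem _ (Subgroup.mul_mem _ hb hc)
      simpa [mul_assoc] using this
    rintro z hz
    rcases hz with rfl | rfl
    · exact ha
    · exact hb⟩

section MyHelpers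

variable {G : Type} [Group G]

lemma my_closure_fxfy : Subgroup.closure ({fx, fy} : Set F2) = ⊤ := by
  have h := FreeGroup.closure_range_of Bool
  rw [eq_top_iff, ← h]
  apply (Subgroup.closure_le _).mpr ?_
  rintro z ⟨b, rfl⟩
  cases b
  · exact Subgroup.subset_closure (Or.inr rfl)
  · exact Subgroup.subset_closure (Or.inl rfl)

lemma my_closure_xbar_ybar : Subgroup.closure ({xbar G, ybar G} : Set (Gbar G)) = ⊤ := by
  have himg : ({xbar G, ybar G} : Set (Gbar G))
      = (QuotientGroup.mk' (NG G)) '' ({fx, fy} : Set F2) := by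
    rw [Set.image_pair]; rfl
  rw [himg, ← MonoidHom.map_closure, my_closure_fxfy]
  exact Subgroup.map_top_of_surjective _ (QuotientGroup.mk'_surjective _)

lemma my_hom_ext {H : Type*} [Group H] (f g : Gbar G →* H)
    (h1 : f (xbar G) = g (xbar G)) (h2 : f (ybar G) = g (ybar G)) : f = g := by
  have key : f.comp (QuotientGroup.mk' (NG G)) = g.comp (QuotientGroup.mk' (NG G)) := by
    apply FreeGroup.ext_hom
    intro a
    cases a
    · exact h2
    · exact h1
  apply MonoidHom.ext
  intro z
  obtain ⟨w, rfl⟩ := QuotientGroup.mk'_surjective (NG G) z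
  exact DFunLike.congr_fun key w

lemma my_p_surj {r : ℕ} (rep : Fin r → G × G) (hrep : ∀ i, rep i ∈ GenPairs G)
    (p : Fin r → (Gbar G →* G))
    (hp : ∀ i, p i (xbar G) = (rep i).1 ∧ p i (ybar G) = (rep i).2)
    (i : Fin r) : Function.Surjective (p i) := by
  rw [← MonoidHom.range_eq_top (f := p i), eq_top_iff, ← hrep i]
  apply (Subgroup.closure_le _).mpr ?_
  rintro z (rfl | rfl)
  · exact ⟨xbar G, (hp i).1⟩
  · exact ⟨ybar G, (hp i).2⟩

end MyHelpers

/-- If `φ(x)` is conjugate to `x` and `φ(y)` to `y` in `Ḡ`, then the action of `φ` on `𝒫_c`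
preserves the `(G×G)`-relation: writing `φ·[g,h]_c = [g′,h′]_c`, the element `g′` is conjugate
to `g` and `h′` is conjugate to `h` in `G`. -/
theorem stmt12 (G : Type) [Group G] [Finite G]
    (r : ℕ) (rep : Fin r → G × G)
    (hrep : ∀ i, rep i ∈ GenPairs G)
    (hdist : ∀ i j : Fin r, (∃ α : MulAut G, (α (rep i).1, α (rep i).2) = rep j) → i = j)
    (hcover : ∀ q ∈ GenPairs G, ∃ i : Fin r, ∃ α : MulAut G, (α (rep i).1, α (rep i).2) = q)
    (p : Fin r → (Gbar G →* G))
    (hp : ∀ i, p i (xbar G) = (rep i).1 ∧ p i (ybar G) = (rep i).2)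
    (Φ : OutG (Gbar G) →* Equiv.Perm (PC G))
    (hΦ : IsPCAction G rep hrep p Φ)
    (φ : MulAut (Gbar G))
    (hx : IsConj (xbar G) (φ (xbar G))) (hy : IsConj (ybar G) (φ (ybar G))) :
    ∀ (g h : G) (hgh : (g, h) ∈ GenPairs G) (g' h' : G) (hg'h' : (g', h') ∈ GenPairs G),
      Φ (OutMk φ) (pcMk (g, h) hgh) = pcMk (g', h') hg'h' →
        IsConj g g' ∧ IsConj h h' := by

  intro g h hgh g' h' hg'h' heq
  have hpsurj : ∀ i, Function.Surjective (p i) := my_p_surj rep hrep p hp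
  -- each composed pair generates
  have hgen : ∀ i : Fin r, (p i (φ (xbar G)), p i (φ (ybar G))) ∈ GenPairs G := by
    intro i
    show Subgroup.closure {p i (φ (xbar G)), p i (φ (ybar G))} = ⊤
    have hsurj : Function.Surjective ((p i).comp φ.toMonoidHom) :=
      (hpsurj i).comp φ.surjective
    have himg : ({p i (φ (xbar G)), p i (φ (ybar G))} : Set G)
        = ((p i).comp φ.toMonoidHom) '' {xbar G, ybar G} := by
      rw [Set.image_pair]; rfl
    rw [himg, ← MonoidHom.map_closure, my_closure_xbar_ybar,
      Subgroup.map_top_of_surjective _ hsurj]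
  choose τ β hβ using fun i => hcover _ (hgen i)
  have hcomp : ∀ i, (p i).comp φ.toMonoidHom = (β i).toMonoidHom.comp (p (τ i)) := by
    intro i
    refine (my_hom_ext _ _ ?_ ?_).symm
    · show β i (p (τ i) (xbar G)) = p i (φ (xbar G))
      rw [(hp (τ i)).1]
      exact congrArg Prod.fst (hβ i)
    · show β i (p (τ i) (ybar G)) = p i (φ (ybar G))
      rw [(hp (τ i)).2]
      exact congrArg Prod.snd (hβ i)
  have hτinj : Function.Injective τ := by
    intro i i' hii
    apply hdist i i'
    refine ⟨β i' * (β i)⁻¹, ?_⟩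
    have e1 : ∀ z, p i' z = (β i' * (β i)⁻¹) (p i z) := by
      intro z
      obtain ⟨w, rfl⟩ := φ.surjective z
      have h1 : p i (φ w) = β i (p (τ i) w) := DFunLike.congr_fun (hcomp i) w
      have h2 : p i' (φ w) = β i' (p (τ i') w) := DFunLike.congr_fun (hcomp i') w
      calc p i' (φ w) = β i' (p (τ i') w) := h2
        _ = β i' (p (τ i) w) := by rw [hii]
        _ = β i' ((β i)⁻¹ (β i (p (τ i) w))) := by
            rw [MulAut.inv_def, MulEquiv.symm_apply_apply]
        _ = β i' ((β i)⁻¹ (p i (φ w))) := by rw [h1]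
        _ = (β i' * (β i)⁻¹) (p i (φ w)) := rfl
    have ex : (β i' * (β i)⁻¹) ((rep i).1) = (rep i').1 := by
      rw [← (hp i).1, ← e1 (xbar G)]
      exact (hp i').1
    have ey : (β i' * (β i)⁻¹) ((rep i).2) = (rep i').2 := by
      rw [← (hp i).2, ← e1 (ybar G)]
      exact (hp i').2
    exact Prod.ext ex ey
  have hτbij : Function.Bijective τ := Finite.injective_iff_bijective.mp hτinj
  set E : Fin r ≃ Fin r := Equiv.ofBijective τ hτbij with hE
  set σ : Equiv.Perm (Fin r) := E.symm with hσ
  set ψ : Fin r → MulAut G := fun i => β (σ i) with hψ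
  have hστ : ∀ i, τ (σ i) = i := fun i => E.apply_symm_apply i
  have hcomp' : ∀ i, (p (σ i)).comp φ.toMonoidHom = (ψ i).toMonoidHom.comp (p i) := by
    intro i
    have := hcomp (σ i)
    rwa [hστ i] at this
  obtain ⟨i, α, hα⟩ := hcover (g, h) hgh
  have hmk : pcMkA α (rep i) (hrep i) = pcMk (g, h) hgh := by
    show Quotient.mk _ (autPair α ⟨rep i, hrep i⟩) = Quotient.mk _ (⟨(g, h), hgh⟩ : ↥(GenPairs G))
    congr 1
    exact Subtype.ext hα
  have hact := hΦ φ σ ψ hcomp' α i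
  rw [hmk, heq] at hact
  obtain ⟨t, ht1, ht2⟩ :=
    Quotient.exact (hact : pcMk (g', h') hg'h' = pcMkA (α * (ψ i)⁻¹) (rep (σ i)) (hrep (σ i)))
  -- ht1 : t * ((α * (ψ i)⁻¹) ((rep (σ i)).1)) * t⁻¹ = ...? direction: from (g',h') side to other
  -- relation r p q with p = ⟨(g',h')⟩, q = autPair...: t * g' * t⁻¹ = (α * (ψ i)⁻¹)((rep σi).1)
  have hx1 : IsConj ((rep (σ i)).1) (ψ i ((rep i).1)) := by
    have hc := (p (σ i)).map_isConj hx
    rw [(hp (σ i)).1] at hc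
    have he : p (σ i) (φ (xbar G)) = ψ i ((rep i).1) := by
      have hcc := DFunLike.congr_fun (hcomp' i) (xbar G)
      simpa [(hp i).1] using hcc
    rwa [he] at hc
  have hy1 : IsConj ((rep (σ i)).2) (ψ i ((rep i).2)) := by
    have hc := (p (σ i)).map_isConj hy
    rw [(hp (σ i)).2] at hc
    have he : p (σ i) (φ (ybar G)) = ψ i ((rep i).2) := by
      have hcc := DFunLike.congr_fun (hcomp' i) (ybar G)
      simpa [(hp i).2] using hcc
    rwa [he] at hc
  have inv_cancel : ∀ z : G, ((ψ i)⁻¹ : MulAut G) (ψ i z) = z := by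
    intro z; rw [MulAut.inv_def, MulEquiv.symm_apply_apply]
  have hx2 : IsConj ((α * (ψ i)⁻¹) ((rep (σ i)).1)) g := by
    have c1 := α.toMonoidHom.map_isConj (((ψ i)⁻¹ : MulAut G).toMonoidHom.map_isConj hx1)
    simp only [MulEquiv.coe_toMonoidHom] at c1
    rw [inv_cancel ((rep i).1)] at c1
    have hg0 : α ((rep i).1) = g := congrArg Prod.fst hα
    rw [hg0] at c1
    exact c1
  have hy2 : IsConj ((α * (ψ i)⁻¹) ((rep (σ i)).2)) h := by
    have c1 := α.toMonoidHom.map_isConj (((ψ i)⁻¹ : MulAut G).toMonoidHom.map_isConj hy1)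
    simp only [MulEquiv.coe_toMonoidHom] at c1
    rw [inv_cancel ((rep i).2)] at c1
    have hh0 : α ((rep i).2) = h := congrArg Prod.snd hα
    rw [hh0] at c1
    exact c1
  have hx3 : IsConj g' ((α * (ψ i)⁻¹) ((rep (σ i)).1)) := isConj_iff.mpr ⟨t, ht1⟩
  have hy3 : IsConj h' ((α * (ψ i)⁻¹) ((rep (σ i)).2)) := isConj_iff.mpr ⟨t, ht2⟩
  exact ⟨(hx3.trans hx2).symm, (hy3.trans hy2).symm⟩
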